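/- The quantity G(v) := sup{ |⟨w, v⟩| : w a unit elementary tensor in ℂ^{n₁} ⊗ ⋯ ⊗ ℂ^{n_p} } defines a norm on ℂ^{n₁} ⊗ ⋯ ⊗ ℂ^{n_p}, and G(v) ≤ ‖v‖ with equality if and only if v is a scalar multiple of an elementary tensor. -/

import Mathlib

noncomputable section

/-- The elementary tensor `a₁ ⊗ ⋯ ⊗ a_p` in `ℂ^{n₁} ⊗ ⋯ ⊗ ℂ^{n_p}`. -/
def tensP {p : ℕ} {n : Fin p → ℕ} (a : ∀ i, EuclideanSpace ℂ (Fin (n i))) :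
    EuclideanSpace ℂ (∀ i, Fin (n i)) :=
  WithLp.toLp 2 (fun f => ∏ i, a i (f i))

/-- `G(v) := sup { |⟨w, v⟩| : w a unit elementary tensor }`. -/
def Gnorm {p : ℕ} {n : Fin p → ℕ} (v : EuclideanSpace ℂ (∀ i, Fin (n i))) : ℝ :=
  sSup {x : ℝ | ∃ w : ∀ i, EuclideanSpace ℂ (Fin (n i)),
    ‖tensP w‖ = 1 ∧ x = ‖inner ℂ (tensP w) v‖}

namespace Stmt16Aux

variable {p : ℕ} {n : Fin p → ℕ}

lemma norm_tensP (a : ∀ i, EuclideanSpace ℂ (Fin (n i))) : ‖tensP a‖ = ∏ i, ‖a i‖ := by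
  have h1 : ‖tensP a‖ ^ 2 = (∏ i, ‖a i‖) ^ 2 := by
    rw [EuclideanSpace.norm_eq, Real.sq_sqrt (by positivity)]
    calc ∑ f : ∀ i, Fin (n i), ‖tensP a f‖ ^ 2
        = ∑ f : ∀ i, Fin (n i), ∏ i, ‖a i (f i)‖ ^ 2 := by
          refine Finset.sum_congr rfl fun f _ => ?_
          show ‖∏ i, a i (f i)‖ ^ 2 = ∏ i, ‖a i (f i)‖ ^ 2
          rw [norm_prod, Finset.prod_pow]
      _ = ∏ i, ∑ j, ‖a i j‖ ^ 2 :=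
          (Fintype.prod_sum (κ := fun i => Fin (n i)) (f := fun i j => ‖a i j‖ ^ 2)).symm
      _ = (∏ i, ‖a i‖) ^ 2 := by
          rw [← Finset.prod_pow]
          exact Finset.prod_congr rfl fun i _ => by
            rw [EuclideanSpace.norm_eq, Real.sq_sqrt (by positivity)]
  have h2 : 0 ≤ ∏ i, ‖a i‖ := Finset.prod_nonneg fun i _ => norm_nonneg _
  nlinarith [norm_nonneg (tensP a)]

lemma tensP_smul (c : Fin p → ℂ) (a : ∀ i, EuclideanSpace ℂ (Fin (n i))) :
    tensP (fun i => c i • a i) = (∏ i, c i) • tensP a := by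
  ext f
  show ∏ i, (c i • a i) (f i) = (∏ i, c i) • ∏ i, a i (f i)
  simp [smul_eq_mul, Finset.prod_mul_distrib]

lemma tensP_single (f : ∀ i, Fin (n i)) :
    tensP (fun i => EuclideanSpace.single (f i) (1 : ℂ)) = EuclideanSpace.single f 1 := by
  ext g
  show ∏ i, (EuclideanSpace.single (f i) (1:ℂ)) (g i) = EuclideanSpace.single f (1:ℂ) g
  rcases eq_or_ne g f with h | h
  · subst h; simp
  · rw [EuclideanSpace.single_apply, if_neg h]
    obtain ⟨i, hi⟩ := Function.ne_iff.mp h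
    apply Finset.prod_eq_zero (Finset.mem_univ i)
    rw [EuclideanSpace.single_apply, if_neg hi]

def GS (v : EuclideanSpace ℂ (∀ i, Fin (n i))) : Set ℝ :=
  {x : ℝ | ∃ w : ∀ i, EuclideanSpace ℂ (Fin (n i)),
    ‖tensP w‖ = 1 ∧ x = ‖inner ℂ (tensP w) v‖}

lemma Gnorm_eq (v : EuclideanSpace ℂ (∀ i, Fin (n i))) : Gnorm v = sSup (GS v) := rfl

lemma GS_le (v : EuclideanSpace ℂ (∀ i, Fin (n i))) {x : ℝ} (hx : x ∈ GS v) : x ≤ ‖v‖ := by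
  obtain ⟨w, hw, rfl⟩ := hx
  calc ‖(inner ℂ (tensP w) v : ℂ)‖ ≤ ‖tensP w‖ * ‖v‖ := norm_inner_le_norm _ _
    _ = ‖v‖ := by rw [hw, one_mul]

lemma GS_bdd (v : EuclideanSpace ℂ (∀ i, Fin (n i))) : BddAbove (GS v) :=
  ⟨‖v‖, fun _ hx => GS_le v hx⟩

lemma GS_mem (v : EuclideanSpace ℂ (∀ i, Fin (n i)))
    (f : ∀ i, Fin (n i)) : ‖v f‖ ∈ GS v := by
  refine ⟨fun i => EuclideanSpace.single (f i) 1, ?_, ?_⟩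
  · rw [tensP_single, EuclideanSpace.norm_single, norm_one]
  · rw [tensP_single, EuclideanSpace.inner_single_left]
    simp

lemma Gnorm_nonneg (hn : ∀ i, 0 < n i) (v : EuclideanSpace ℂ (∀ i, Fin (n i))) :
    0 ≤ Gnorm v := by
  have f : ∀ i, Fin (n i) := fun i => ⟨0, hn i⟩
  exact le_trans (norm_nonneg _) (le_csSup (GS_bdd v) (GS_mem v f))

lemma Gnorm_le_norm (v : EuclideanSpace ℂ (∀ i, Fin (n i))) :
    Gnorm v ≤ ‖v‖ :=
  Real.sSup_le (fun _ hx => GS_le v hx) (norm_nonneg v)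

lemma abs_inner_le_Gnorm (v : EuclideanSpace ℂ (∀ i, Fin (n i)))
    {w : ∀ i, EuclideanSpace ℂ (Fin (n i))} (hw : ‖tensP w‖ = 1) :
    ‖inner ℂ (tensP w) v‖ ≤ Gnorm v :=
  le_csSup (GS_bdd v) ⟨w, hw, rfl⟩

lemma Gnorm_smul_le (hn : ∀ i, 0 < n i) (c : ℂ) (v : EuclideanSpace ℂ (∀ i, Fin (n i))) :
    Gnorm (c • v) ≤ ‖c‖ * Gnorm v := by
  refine Real.sSup_le (fun x hx => ?_)
    (mul_nonneg (norm_nonneg c) (Gnorm_nonneg hn v))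
  obtain ⟨w, hw, rfl⟩ := hx
  rw [inner_smul_right, norm_mul]
  exact mul_le_mul_of_nonneg_left (abs_inner_le_Gnorm v hw) (norm_nonneg c)

lemma Gnorm_smul (hn : ∀ i, 0 < n i) (c : ℂ) (v : EuclideanSpace ℂ (∀ i, Fin (n i))) :
    Gnorm (c • v) = ‖c‖ * Gnorm v := by
  rcases eq_or_ne c 0 with rfl | hc
  · simp only [norm_zero, zero_mul, zero_smul]
    refine le_antisymm (Real.sSup_le (fun x hx => ?_) le_rfl) (Gnorm_nonneg hn 0)
    obtain ⟨w, hw, rfl⟩ := hx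
    simp
  · refine le_antisymm (Gnorm_smul_le hn c v) ?_
    have h := Gnorm_smul_le hn c⁻¹ (c • v)
    rw [inv_smul_smul₀ hc, norm_inv] at h
    have hpos : (0:ℝ) < ‖c‖ := norm_pos_iff.mpr hc
    calc ‖c‖ * Gnorm v
        ≤ ‖c‖ * (‖c‖⁻¹ * Gnorm (c • v)) :=
          mul_le_mul_of_nonneg_left h hpos.le
      _ = Gnorm (c • v) := by field_simp

lemma Gnorm_triangle (hn : ∀ i, 0 < n i) (v w : EuclideanSpace ℂ (∀ i, Fin (n i))) :
    Gnorm (v + w) ≤ Gnorm v + Gnorm w := by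
  refine Real.sSup_le (fun x hx => ?_)
    (add_nonneg (Gnorm_nonneg hn v) (Gnorm_nonneg hn w))
  obtain ⟨u, hu, rfl⟩ := hx
  rw [inner_add_right]
  calc ‖inner ℂ (tensP u) v + inner ℂ (tensP u) w‖
      ≤ ‖inner ℂ (tensP u) v‖ + ‖inner ℂ (tensP u) w‖ :=
        norm_add_le _ _
    _ ≤ Gnorm v + Gnorm w :=
        add_le_add (abs_inner_le_Gnorm v hu) (abs_inner_le_Gnorm w hu)

lemma Gnorm_zero_iff (hn : ∀ i, 0 < n i) (v : EuclideanSpace ℂ (∀ i, Fin (n i))) :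
    Gnorm v = 0 ↔ v = 0 := by
  constructor
  · intro h
    by_contra hv
    obtain ⟨f, hf⟩ : ∃ f, v f ≠ 0 := by
      by_contra hall
      push_neg at hall
      exact hv (by ext f; exact hall f)
    have h1 : ‖v f‖ ≤ Gnorm v := le_csSup (GS_bdd v) (GS_mem v f)
    rw [h] at h1
    exact hf (by simpa using le_antisymm h1 (norm_nonneg _))
  · rintro rfl
    refine le_antisymm (Real.sSup_le (fun x hx => ?_) le_rfl) (Gnorm_nonneg hn 0)
    obtain ⟨w, hw, rfl⟩ := hx
    simp

lemma continuous_tensP : Continuous fun w : ∀ i, EuclideanSpace ℂ (Fin (n i)) => tensP w := by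
  have h : Continuous fun w : ∀ i, EuclideanSpace ℂ (Fin (n i)) =>
      (WithLp.toLp 2 (fun f : ∀ i, Fin (n i) => ∏ i, w i (f i)) :
        EuclideanSpace ℂ (∀ i, Fin (n i))) := by
    refine (PiLp.continuous_toLp 2 _).comp (continuous_pi fun f => ?_)
    exact continuous_finset_prod _ fun i _ =>
      ((EuclideanSpace.proj (f i) : EuclideanSpace ℂ (Fin (n i)) →L[ℂ] ℂ).continuous).comp
        (continuous_apply i)
  exact h

/-- Componentwise normalization keeps the elementary tensor fixed when it is a unit vector. -/
lemma normalize_tensP {w : ∀ i, EuclideanSpace ℂ (Fin (n i))} (hw : ‖tensP w‖ = 1) :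
    tensP (fun i => ((‖w i‖ : ℂ))⁻¹ • w i) = tensP w := by
  have hprod : ∏ i, ‖w i‖ = 1 := by rw [← norm_tensP, hw]
  have := tensP_smul (fun i => ((‖w i‖ : ℂ))⁻¹) w
  rw [this]
  have : (∏ i, ((‖w i‖ : ℂ))⁻¹) = 1 := by
    rw [Finset.prod_inv_distrib, ← Complex.ofReal_prod, hprod, Complex.ofReal_one, inv_one]
  rw [this, one_smul]

/-- If `v` is a nonzero scalar multiple of an elementary tensor, `G v = ‖v‖`. -/
lemma Gnorm_eq_norm_of_elementary (hn : ∀ i, 0 < n i) (c : ℂ)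
    (w : ∀ i, EuclideanSpace ℂ (Fin (n i))) :
    Gnorm (c • tensP w) = ‖c • tensP w‖ := by
  set v := c • tensP w with hv
  rcases eq_or_ne v 0 with h0 | h0
  · rw [h0, norm_zero]
    exact (Gnorm_zero_iff hn 0).mpr rfl
  · refine le_antisymm (Gnorm_le_norm v) ?_
    have hc : c ≠ 0 := fun h => h0 (by rw [hv, h, zero_smul])
    have htw : tensP w ≠ 0 := fun h => h0 (by rw [hv, h, smul_zero])
    have hnorm : (0:ℝ) < ‖tensP w‖ := norm_pos_iff.mpr htw
    have hprod : ∏ i, ‖w i‖ = ‖tensP w‖ := (norm_tensP w).symm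
    have hwi : ∀ i, ‖w i‖ ≠ 0 := by
      intro i hi
      rw [← hprod] at hnorm
      exact absurd (Finset.prod_eq_zero (Finset.mem_univ i) hi) (ne_of_gt hnorm)
    set w' : ∀ i, EuclideanSpace ℂ (Fin (n i)) := fun i => ((‖w i‖ : ℂ))⁻¹ • w i with hw'
    have hscal : tensP w' = ((‖tensP w‖ : ℂ))⁻¹ • tensP w := by
      rw [hw', tensP_smul]
      congr 1
      rw [Finset.prod_inv_distrib, ← Complex.ofReal_prod, hprod]
    have hw'norm : ‖tensP w'‖ = 1 := by
      rw [hscal, norm_smul]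
      simp only [norm_inv, Complex.norm_real, Real.norm_eq_abs,
        abs_of_pos hnorm]
      field_simp
    have hval : ‖inner ℂ (tensP w') v‖ = ‖v‖ := by
      rw [hscal, hv, inner_smul_left, inner_smul_right, inner_self_eq_norm_sq_to_K]
      rw [norm_smul]
      simp only [norm_mul, norm_inv, Complex.norm_conj, Complex.norm_real, Real.norm_eq_abs, norm_pow,
        RCLike.norm_ofReal, abs_norm,
        abs_of_pos hnorm]
      field_simp
    calc ‖v‖ = ‖inner ℂ (tensP w') v‖ := hval.symm
      _ ≤ Gnorm v := abs_inner_le_Gnorm v hw'norm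

end Stmt16Aux

open Stmt16Aux in
/-- `G` is a norm, `G(v) ≤ ‖v‖`, with equality iff `v` is a scalar multiple of an
elementary tensor. -/
theorem stmt16 {p : ℕ} {n : Fin p → ℕ} (hn : ∀ i, 0 < n i) :
    (∀ v : EuclideanSpace ℂ (∀ i, Fin (n i)), 0 ≤ Gnorm v) ∧
    (∀ v : EuclideanSpace ℂ (∀ i, Fin (n i)), Gnorm v = 0 ↔ v = 0) ∧
    (∀ (c : ℂ) (v : EuclideanSpace ℂ (∀ i, Fin (n i))),
      Gnorm (c • v) = ‖c‖ * Gnorm v) ∧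
    (∀ v w : EuclideanSpace ℂ (∀ i, Fin (n i)), Gnorm (v + w) ≤ Gnorm v + Gnorm w) ∧
    (∀ v : EuclideanSpace ℂ (∀ i, Fin (n i)), Gnorm v ≤ ‖v‖ ∧
      (Gnorm v = ‖v‖ ↔ ∃ (c : ℂ) (w : ∀ i, EuclideanSpace ℂ (Fin (n i))),
        v = c • tensP w)) := by
  refine ⟨Gnorm_nonneg hn, Gnorm_zero_iff hn, Gnorm_smul hn, Gnorm_triangle hn,
    fun v => ⟨Gnorm_le_norm v, ?_, ?_⟩⟩
  · -- hard direction: G v = ‖v‖ → v is a scalar multiple of an elementary tensor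
    intro hG
    rcases eq_or_ne v 0 with rfl | hv
    · exact ⟨0, fun _ => 0, by simp⟩
    -- compactness argument
    set K : Set (∀ i, EuclideanSpace ℂ (Fin (n i))) :=
      Set.univ.pi fun i => Metric.sphere (0 : EuclideanSpace ℂ (Fin (n i))) 1 with hK
    have hKc : IsCompact K := isCompact_univ_pi fun i => isCompact_sphere 0 1
    have hKne : K.Nonempty := by
      refine ⟨fun i => EuclideanSpace.single ⟨0, hn i⟩ 1, fun i _ => ?_⟩
      simp [EuclideanSpace.norm_single]
    have hφ : Continuous fun w : ∀ i, EuclideanSpace ℂ (Fin (n i)) =>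
        ‖inner ℂ (tensP w) v‖ := by
      have : Continuous fun w : ∀ i, EuclideanSpace ℂ (Fin (n i)) =>
          (inner ℂ (tensP w) v : ℂ) := Continuous.inner continuous_tensP continuous_const
      exact continuous_norm.comp this
    obtain ⟨w₀, hw₀K, hmax⟩ := hKc.exists_isMaxOn hKne hφ.continuousOn
    have hw₀norm : ‖tensP w₀‖ = 1 := by
      rw [Stmt16Aux.norm_tensP]
      refine Finset.prod_eq_one fun i _ => ?_
      have := hw₀K i (Set.mem_univ i)
      rwa [mem_sphere_zero_iff_norm] at this
    -- Gnorm v = Complex.abs (inner (tensP w₀) v)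
    have hGle : Gnorm v ≤ ‖inner ℂ (tensP w₀) v‖ := by
      refine Real.sSup_le (fun x hx => ?_) (norm_nonneg _)
      obtain ⟨w, hw, rfl⟩ := hx
      have hmem : (fun i => ((‖w i‖ : ℂ))⁻¹ • w i) ∈ K := by
        intro i _
        rw [mem_sphere_zero_iff_norm, norm_smul]
        have hwi : ‖w i‖ ≠ 0 := by
          intro hi
          have hp : ∏ j, ‖w j‖ = 1 := by rw [← Stmt16Aux.norm_tensP, hw]
          rw [Finset.prod_eq_zero (Finset.mem_univ i) hi] at hp
          norm_num at hp
        simp only [norm_inv, Complex.norm_real, Real.norm_eq_abs, abs_norm]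
        field_simp
      have := hmax hmem
      simpa [isMaxOn_iff, Stmt16Aux.normalize_tensP hw] using this
    have hGge : ‖inner ℂ (tensP w₀) v‖ ≤ Gnorm v :=
      abs_inner_le_Gnorm v hw₀norm
    have hkey : ‖(inner ℂ (tensP w₀) v : ℂ)‖ = ‖tensP w₀‖ * ‖v‖ := by
      rw [hw₀norm, one_mul]
      linarith [hGle, hGge, hG.symm.le, hG.le]
    have htw₀ : tensP w₀ ≠ 0 := by
      intro h
      rw [h, norm_zero] at hw₀norm
      norm_num at hw₀norm
    obtain ⟨r, _, hr⟩ := (norm_inner_eq_norm_iff htw₀ hv).mp hkey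
    exact ⟨r, w₀, hr⟩
  · rintro ⟨c, w, rfl⟩
    exact Gnorm_eq_norm_of_elementary hn c w
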